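/- Partial semigroup property of the positive-imaginary-part matrices: If Q ∈ 𝓜(q,r,+) and R ∈ 𝓜(r,s,+), then the pair (Q,R) is ⊲_r-suitable (i.e. 1_r − α̃δ is invertible, where δ is the lower-right r×r block of Q and α̃ is the upper-left r×r block of R) and Q ⊲_r R ∈ 𝓜(q,s,+). The same statement holds with 𝓜(·,·,−) := −𝓜(·,·,+) in place of 𝓜(·,·,+) throughout. -/

import Mathlib

open Matrix
open scoped ComplexOrder

noncomputable section

/-- The imaginary part `(M − M^*)/(2i)` of a square complex matrix. -/
def matIm {n : Type*} (M : Matrix n n ℂ) : Matrix n n ℂ :=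
  (2 * Complex.I)⁻¹ • (M - Mᴴ)

/-- The pair `(Q, R)` (with assigned block splittings) is `⊲`-suitable:
`1 - α̃ δ` is invertible. -/
def Suitable {q r s : ℕ}
    (Q : Matrix (Fin q ⊕ Fin r) (Fin q ⊕ Fin r) ℂ)
    (R : Matrix (Fin r ⊕ Fin s) (Fin r ⊕ Fin s) ℂ) : Prop :=
  IsUnit (1 - R.toBlocks₁₁ * Q.toBlocks₂₂)

/-- The operation `Q ⊲_r R` on block matrices. -/
def tri {q r s : ℕ}
    (Q : Matrix (Fin q ⊕ Fin r) (Fin q ⊕ Fin r) ℂ)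
    (R : Matrix (Fin r ⊕ Fin s) (Fin r ⊕ Fin s) ℂ) :
    Matrix (Fin q ⊕ Fin s) (Fin q ⊕ Fin s) ℂ :=
  fromBlocks
    (Q.toBlocks₁₁ +
      Q.toBlocks₁₂ * (1 - R.toBlocks₁₁ * Q.toBlocks₂₂)⁻¹ * R.toBlocks₁₁ * Q.toBlocks₂₁)
    (Q.toBlocks₁₂ * (1 - R.toBlocks₁₁ * Q.toBlocks₂₂)⁻¹ * R.toBlocks₁₂)
    (R.toBlocks₂₁ * (1 - Q.toBlocks₂₂ * R.toBlocks₁₁)⁻¹ * Q.toBlocks₂₁)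
    (R.toBlocks₂₂ +
      R.toBlocks₂₁ * (1 - Q.toBlocks₂₂ * R.toBlocks₁₁)⁻¹ * Q.toBlocks₂₂ * R.toBlocks₁₂)

/-- `Q ∈ 𝓜(q,r,+)`: `Im(α)` and `Im(δ)` are positive definite and `Im(Q)` is
positive semidefinite. -/
def MPlus {q r : ℕ} (Q : Matrix (Fin q ⊕ Fin r) (Fin q ⊕ Fin r) ℂ) : Prop :=
  (matIm Q.toBlocks₁₁).PosDef ∧ (matIm Q.toBlocks₂₂).PosDef ∧ (matIm Q).PosSemidef

/-- `Q ∈ 𝓜(q,r,−) := −𝓜(q,r,+)`. -/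
def MMinus {q r : ℕ} (Q : Matrix (Fin q ⊕ Fin r) (Fin q ⊕ Fin r) ℂ) : Prop :=
  MPlus (-Q)

namespace MPSAux

set_option linter.unusedSectionVars false

variable {m n p : Type*} [Fintype m] [Fintype n] [Fintype p]

lemma quad_conjTranspose (M : Matrix n n ℂ) (z : n → ℂ) :
    star z ⬝ᵥ Mᴴ *ᵥ z = star (star z ⬝ᵥ M *ᵥ z) := by
  rw [mulVec_conjTranspose, dotProduct_star, star_star, dotProduct_mulVec]

lemma matIm_form (M : Matrix n n ℂ) (z : n → ℂ) :
    star z ⬝ᵥ (matIm M) *ᵥ z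
      = (2 * Complex.I)⁻¹ * (star z ⬝ᵥ M *ᵥ z - star (star z ⬝ᵥ M *ᵥ z)) := by
  rw [matIm, smul_mulVec, dotProduct_smul, sub_mulVec, dotProduct_sub,
    quad_conjTranspose, smul_eq_mul]

lemma matIm_isHermitian (M : Matrix n n ℂ) : (matIm M).IsHermitian := by
  unfold Matrix.IsHermitian matIm
  ext i j
  simp [Matrix.conjTranspose_apply, Complex.ext_iff]
  constructor <;> ring

lemma star_elim (x : m → ℂ) (y : n → ℂ) :
    star (Sum.elim x y) = Sum.elim (star x) (star y) := by
  funext i; cases i <;> rfl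

lemma matIm_toBlocks₁₁ (M : Matrix (m ⊕ n) (m ⊕ n) ℂ) :
    (matIm M).toBlocks₁₁ = matIm M.toBlocks₁₁ := by
  ext i j; simp [matIm, Matrix.toBlocks₁₁, Matrix.conjTranspose_apply]

lemma matIm_toBlocks₂₂ (M : Matrix (m ⊕ n) (m ⊕ n) ℂ) :
    (matIm M).toBlocks₂₂ = matIm M.toBlocks₂₂ := by
  ext i j; simp [matIm, Matrix.toBlocks₂₂, Matrix.conjTranspose_apply]

lemma quad_inl (M : Matrix (m ⊕ n) (m ⊕ n) ℂ) (x : m → ℂ) :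
    star (Sum.elim x (0 : n → ℂ)) ⬝ᵥ M *ᵥ Sum.elim x 0
      = star x ⬝ᵥ M.toBlocks₁₁ *ᵥ x := by
  conv_lhs => rw [← fromBlocks_toBlocks M]
  rw [fromBlocks_mulVec, star_elim]
  simp [sumElim_dotProduct_sumElim]

lemma quad_inr (M : Matrix (m ⊕ n) (m ⊕ n) ℂ) (y : n → ℂ) :
    star (Sum.elim (0 : m → ℂ) y) ⬝ᵥ M *ᵥ Sum.elim 0 y
      = star y ⬝ᵥ M.toBlocks₂₂ *ᵥ y := by
  conv_lhs => rw [← fromBlocks_toBlocks M]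
  rw [fromBlocks_mulVec, star_elim]
  simp [sumElim_dotProduct_sumElim]

lemma unit_one_sub [DecidableEq n] (A D : Matrix n n ℂ)
    (hA : (matIm A).PosDef) (hD : (matIm D).PosDef) :
    IsUnit (1 - A * D) := by
  rw [Matrix.isUnit_iff_isUnit_det, isUnit_iff_ne_zero]
  intro hdet
  obtain ⟨v, hv, hveq⟩ := (Matrix.exists_mulVec_eq_zero_iff).2 hdet
  have hvA : v = A *ᵥ (D *ᵥ v) := by
    have h := hveq
    rw [sub_mulVec, one_mulVec, sub_eq_zero] at h
    rw [mulVec_mulVec]; exact h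
  have hwne : D *ᵥ v ≠ 0 := fun h => hv (by rw [hvA, h, mulVec_zero])
  have h1 : 0 < star v ⬝ᵥ (matIm D) *ᵥ v := hD.dotProduct_mulVec_pos hv
  have h2 : 0 < star (D *ᵥ v) ⬝ᵥ (matIm A) *ᵥ (D *ᵥ v) := hA.dotProduct_mulVec_pos hwne
  rw [matIm_form] at h1 h2
  have key : star (D *ᵥ v) ⬝ᵥ A *ᵥ (D *ᵥ v) = star (star v ⬝ᵥ D *ᵥ v) := by
    rw [← hvA, star_dotProduct]
  rw [key, star_star] at h2
  have hneg : (2 * Complex.I)⁻¹ * (star (star v ⬝ᵥ D *ᵥ v) - star v ⬝ᵥ D *ᵥ v)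
      = -((2 * Complex.I)⁻¹ * (star v ⬝ᵥ D *ᵥ v - star (star v ⬝ᵥ D *ᵥ v))) := by ring
  rw [hneg] at h2
  exact lt_asymm h1 (neg_pos.mp h2)

lemma core_lemma [DecidableEq n]
    (a : Matrix m m ℂ) (b : Matrix m n ℂ) (c : Matrix n m ℂ) (d : Matrix n n ℂ)
    (a' : Matrix n n ℂ) (b' : Matrix n p ℂ) (c' : Matrix p n ℂ) (d' : Matrix p p ℂ)
    (hdet : IsUnit (1 - a' * d).det) (hdet2 : IsUnit (1 - d * a').det)
    (x : m → ℂ) (y : p → ℂ) :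
    ∃ u w : n → ℂ,
      u = a' *ᵥ w + b' *ᵥ y ∧
      w = c *ᵥ x + d *ᵥ u ∧
      star (Sum.elim x y) ⬝ᵥ
          matIm (fromBlocks (a + b * (1 - a' * d)⁻¹ * a' * c) (b * (1 - a' * d)⁻¹ * b')
            (c' * (1 - d * a')⁻¹ * c) (d' + c' * (1 - d * a')⁻¹ * d * b')) *ᵥ Sum.elim x y
        = star (Sum.elim x u) ⬝ᵥ matIm (fromBlocks a b c d) *ᵥ Sum.elim x u
          + star (Sum.elim w y) ⬝ᵥ matIm (fromBlocks a' b' c' d') *ᵥ Sum.elim w y := by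
  set u : n → ℂ := (1 - a' * d)⁻¹ *ᵥ (a' *ᵥ (c *ᵥ x) + b' *ᵥ y) with hu_def
  set w : n → ℂ := c *ᵥ x + d *ᵥ u with hw_def
  have hu1 : (1 - a' * d) *ᵥ u = a' *ᵥ (c *ᵥ x) + b' *ᵥ y := by
    rw [hu_def, mulVec_mulVec, Matrix.mul_nonsing_inv _ hdet, one_mulVec]
  have hu2 : u = a' *ᵥ w + b' *ᵥ y := by
    have h := hu1
    rw [sub_mulVec, one_mulVec, sub_eq_iff_eq_add] at h
    conv_lhs => rw [h]
    rw [hw_def]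
    simp only [mulVec_add, mulVec_mulVec]
    abel
  have hw1 : (1 - d * a') *ᵥ w = c *ᵥ x + (d * b') *ᵥ y := by
    have hdu : d *ᵥ u = (d * a') *ᵥ w + (d * b') *ᵥ y := by
      rw [hu2]; simp only [mulVec_add, mulVec_mulVec]
    rw [sub_mulVec, one_mulVec, sub_eq_iff_eq_add]
    conv_lhs => rw [hw_def]
    rw [hdu]
    abel
  have hw2 : w = (1 - d * a')⁻¹ *ᵥ (c *ᵥ x + (d * b') *ᵥ y) := by
    rw [← hw1, mulVec_mulVec, Matrix.nonsing_inv_mul _ hdet2, one_mulVec]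
  refine ⟨u, w, hu2, hw_def, ?_⟩
  have hmv : (fromBlocks (a + b * (1 - a' * d)⁻¹ * a' * c) (b * (1 - a' * d)⁻¹ * b')
        (c' * (1 - d * a')⁻¹ * c) (d' + c' * (1 - d * a')⁻¹ * d * b')) *ᵥ Sum.elim x y
      = Sum.elim (a *ᵥ x + b *ᵥ u) (c' *ᵥ w + d' *ᵥ y) := by
    have hA : (a + b * (1 - a' * d)⁻¹ * a' * c) *ᵥ x + (b * (1 - a' * d)⁻¹ * b') *ᵥ y
        = a *ᵥ x + b *ᵥ u := by
      rw [hu_def]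
      simp only [add_mulVec, mulVec_add, mulVec_mulVec, Matrix.mul_assoc]
      abel
    have hB : (c' * (1 - d * a')⁻¹ * c) *ᵥ x + (d' + c' * (1 - d * a')⁻¹ * d * b') *ᵥ y
        = c' *ᵥ w + d' *ᵥ y := by
      rw [hw2]
      simp only [add_mulVec, mulVec_add, mulVec_mulVec, Matrix.mul_assoc]
      abel
    rw [fromBlocks_mulVec]
    simp only [Sum.elim_comp_inl, Sum.elim_comp_inr]
    rw [hA, hB]
  have hFQ : star (Sum.elim x u) ⬝ᵥ (fromBlocks a b c d) *ᵥ Sum.elim x u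
      = star x ⬝ᵥ (a *ᵥ x + b *ᵥ u) + star u ⬝ᵥ w := by
    rw [fromBlocks_mulVec]
    simp only [Sum.elim_comp_inl, Sum.elim_comp_inr]
    rw [star_elim, sumElim_dotProduct_sumElim, ← hw_def]
  have hFR : star (Sum.elim w y) ⬝ᵥ (fromBlocks a' b' c' d') *ᵥ Sum.elim w y
      = star w ⬝ᵥ u + star y ⬝ᵥ (c' *ᵥ w + d' *ᵥ y) := by
    rw [fromBlocks_mulVec]
    simp only [Sum.elim_comp_inl, Sum.elim_comp_inr]
    rw [star_elim, sumElim_dotProduct_sumElim, ← hu2]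
  have hF : star (Sum.elim x y) ⬝ᵥ
        (fromBlocks (a + b * (1 - a' * d)⁻¹ * a' * c) (b * (1 - a' * d)⁻¹ * b')
          (c' * (1 - d * a')⁻¹ * c) (d' + c' * (1 - d * a')⁻¹ * d * b')) *ᵥ Sum.elim x y
      = star x ⬝ᵥ (a *ᵥ x + b *ᵥ u) + star y ⬝ᵥ (c' *ᵥ w + d' *ᵥ y) := by
    rw [hmv, star_elim, sumElim_dotProduct_sumElim]
  have hs1 : star (star u ⬝ᵥ w) = star w ⬝ᵥ u := (star_dotProduct w u).symm
  have hs2 : star (star w ⬝ᵥ u) = star u ⬝ᵥ w := (star_dotProduct u w).symm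
  rw [matIm_form, matIm_form, matIm_form, hF, hFQ, hFR]
  simp only [star_add, hs1, hs2]
  ring

lemma toBlocks₁₁_neg (M : Matrix (m ⊕ n) (m ⊕ n) ℂ) : (-M).toBlocks₁₁ = -M.toBlocks₁₁ := rfl
lemma toBlocks₁₂_neg (M : Matrix (m ⊕ n) (m ⊕ n) ℂ) : (-M).toBlocks₁₂ = -M.toBlocks₁₂ := rfl
lemma toBlocks₂₁_neg (M : Matrix (m ⊕ n) (m ⊕ n) ℂ) : (-M).toBlocks₂₁ = -M.toBlocks₂₁ := rfl
lemma toBlocks₂₂_neg (M : Matrix (m ⊕ n) (m ⊕ n) ℂ) : (-M).toBlocks₂₂ = -M.toBlocks₂₂ := rfl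

lemma matIm_conj (J M : Matrix n n ℂ) (hJ : Jᴴ = J) :
    matIm (J * M * J) = J * matIm M * J := by
  unfold matIm
  simp only [conjTranspose_mul, hJ, Matrix.mul_smul, Matrix.smul_mul, Matrix.mul_sub,
    Matrix.sub_mul, Matrix.mul_assoc]

/-- the signature matrix `J = diag(1, -1)` -/
def Jm (m n : Type*) [DecidableEq m] [DecidableEq n] : Matrix (m ⊕ n) (m ⊕ n) ℂ :=
  fromBlocks 1 0 0 (-1)

lemma Jm_herm [DecidableEq m] [DecidableEq n] : (Jm m n)ᴴ = Jm m n := by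
  simp [Jm, fromBlocks_conjTranspose]

lemma Jm_conj_fromBlocks [DecidableEq m] [DecidableEq n]
    (A : Matrix m m ℂ) (B : Matrix m n ℂ) (C : Matrix n m ℂ) (D : Matrix n n ℂ) :
    Jm m n * fromBlocks A B C D * Jm m n = fromBlocks A (-B) (-C) D := by
  simp [Jm, fromBlocks_multiply]

lemma key {q r s : ℕ}
    (Q : Matrix (Fin q ⊕ Fin r) (Fin q ⊕ Fin r) ℂ)
    (R : Matrix (Fin r ⊕ Fin s) (Fin r ⊕ Fin s) ℂ)
    (hQ : MPlus Q) (hR : MPlus R) : Suitable Q R ∧ MPlus (tri Q R) := by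
  obtain ⟨hQ1, hQ2, hQ0⟩ := hQ
  obtain ⟨hR1, hR2, hR0⟩ := hR
  have hU : IsUnit (1 - R.toBlocks₁₁ * Q.toBlocks₂₂) := unit_one_sub _ _ hR1 hQ2
  have hdet : IsUnit (1 - R.toBlocks₁₁ * Q.toBlocks₂₂).det :=
    (Matrix.isUnit_iff_isUnit_det _).1 hU
  have hdet2 : IsUnit (1 - Q.toBlocks₂₂ * R.toBlocks₁₁).det := by
    rwa [Matrix.det_one_sub_mul_comm]
  have core : ∀ (x : Fin q → ℂ) (y : Fin s → ℂ), ∃ u w : Fin r → ℂ,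
      u = R.toBlocks₁₁ *ᵥ w + R.toBlocks₁₂ *ᵥ y ∧
      w = Q.toBlocks₂₁ *ᵥ x + Q.toBlocks₂₂ *ᵥ u ∧
      star (Sum.elim x y) ⬝ᵥ matIm (tri Q R) *ᵥ Sum.elim x y
        = star (Sum.elim x u) ⬝ᵥ matIm Q *ᵥ Sum.elim x u
          + star (Sum.elim w y) ⬝ᵥ matIm R *ᵥ Sum.elim w y := by
    intro x y
    obtain ⟨u, w, h1, h2, h3⟩ := core_lemma Q.toBlocks₁₁ Q.toBlocks₁₂ Q.toBlocks₂₁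
      Q.toBlocks₂₂ R.toBlocks₁₁ R.toBlocks₁₂ R.toBlocks₂₁ R.toBlocks₂₂ hdet hdet2 x y
    rw [fromBlocks_toBlocks, fromBlocks_toBlocks] at h3
    refine ⟨u, w, h1, h2, ?_⟩
    simp only [tri]
    exact h3
  refine ⟨hU, ?_, ?_, ?_⟩
  · refine .of_dotProduct_mulVec_pos (matIm_isHermitian _) (fun x hx => ?_)
    obtain ⟨u, w, hu, hw, hid⟩ := core x 0
    rw [← matIm_toBlocks₁₁, ← quad_inl, hid]
    by_cases hw0 : w = 0
    · have hu0 : u = 0 := by rw [hu, hw0]; simp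
      rw [hu0, hw0]
      have h1 : star (Sum.elim x (0 : Fin r → ℂ)) ⬝ᵥ matIm Q *ᵥ Sum.elim x 0
          = star x ⬝ᵥ matIm Q.toBlocks₁₁ *ᵥ x := by rw [quad_inl, matIm_toBlocks₁₁]
      have hz : (Sum.elim (0 : Fin r → ℂ) (0 : Fin s → ℂ)) = 0 := by
        funext i; cases i <;> rfl
      have h2 : star (Sum.elim (0 : Fin r → ℂ) (0 : Fin s → ℂ)) ⬝ᵥ
          matIm R *ᵥ Sum.elim 0 0 = 0 := by rw [hz]; simp
      rw [h1, h2, add_zero]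
      exact hQ1.dotProduct_mulVec_pos hx
    · have h2 : star (Sum.elim w (0 : Fin s → ℂ)) ⬝ᵥ matIm R *ᵥ Sum.elim w 0
          = star w ⬝ᵥ matIm R.toBlocks₁₁ *ᵥ w := by rw [quad_inl, matIm_toBlocks₁₁]
      rw [h2]
      exact add_pos_of_nonneg_of_pos (hQ0.dotProduct_mulVec_nonneg _) (hR1.dotProduct_mulVec_pos hw0)
  · refine .of_dotProduct_mulVec_pos (matIm_isHermitian _) (fun y hy => ?_)
    obtain ⟨u, w, hu, hw, hid⟩ := core 0 y
    rw [← matIm_toBlocks₂₂, ← quad_inr, hid]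
    by_cases hu0 : u = 0
    · have hw0 : w = 0 := by rw [hw, hu0]; simp
      rw [hu0, hw0]
      have hz : (Sum.elim (0 : Fin q → ℂ) (0 : Fin r → ℂ)) = 0 := by
        funext i; cases i <;> rfl
      have h1 : star (Sum.elim (0 : Fin q → ℂ) (0 : Fin r → ℂ)) ⬝ᵥ
          matIm Q *ᵥ Sum.elim 0 0 = 0 := by rw [hz]; simp
      have h2 : star (Sum.elim (0 : Fin r → ℂ) y) ⬝ᵥ matIm R *ᵥ Sum.elim 0 y
          = star y ⬝ᵥ matIm R.toBlocks₂₂ *ᵥ y := by rw [quad_inr, matIm_toBlocks₂₂]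
      rw [h1, h2, zero_add]
      exact hR2.dotProduct_mulVec_pos hy
    · have h1 : star (Sum.elim (0 : Fin q → ℂ) u) ⬝ᵥ matIm Q *ᵥ Sum.elim 0 u
          = star u ⬝ᵥ matIm Q.toBlocks₂₂ *ᵥ u := by rw [quad_inr, matIm_toBlocks₂₂]
      rw [h1]
      exact add_pos_of_pos_of_nonneg (hQ2.dotProduct_mulVec_pos hu0) (hR0.dotProduct_mulVec_nonneg _)
  · refine .of_dotProduct_mulVec_nonneg (matIm_isHermitian _) (fun z => ?_)
    have hz : z = Sum.elim (z ∘ Sum.inl) (z ∘ Sum.inr) := by funext i; cases i <;> rfl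
    rw [hz]
    obtain ⟨u, w, _, _, hid⟩ := core (z ∘ Sum.inl) (z ∘ Sum.inr)
    rw [hid]
    exact add_nonneg (hQ0.dotProduct_mulVec_nonneg _) (hR0.dotProduct_mulVec_nonneg _)

lemma tri_neg_neg {q r s : ℕ}
    (Q : Matrix (Fin q ⊕ Fin r) (Fin q ⊕ Fin r) ℂ)
    (R : Matrix (Fin r ⊕ Fin s) (Fin r ⊕ Fin s) ℂ) :
    tri (-Q) (-R) = fromBlocks (-((tri Q R).toBlocks₁₁)) ((tri Q R).toBlocks₁₂)
      ((tri Q R).toBlocks₂₁) (-((tri Q R).toBlocks₂₂)) := by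
  simp only [tri, toBlocks₁₁_neg, toBlocks₁₂_neg, toBlocks₂₁_neg, toBlocks₂₂_neg,
    toBlocks_fromBlocks₁₁, toBlocks_fromBlocks₁₂, toBlocks_fromBlocks₂₁, toBlocks_fromBlocks₂₂,
    Matrix.neg_mul, Matrix.mul_neg, neg_neg, neg_add]

lemma mplus_flip {q s : ℕ} (M : Matrix (Fin q ⊕ Fin s) (Fin q ⊕ Fin s) ℂ)
    (h : MPlus (fromBlocks (-(M.toBlocks₁₁)) M.toBlocks₁₂ M.toBlocks₂₁ (-(M.toBlocks₂₂)))) :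
    MPlus (-M) := by
  obtain ⟨h1, h2, h0⟩ := h
  refine ⟨?_, ?_, ?_⟩
  · rw [toBlocks₁₁_neg]
    simpa [toBlocks_fromBlocks₁₁] using h1
  · rw [toBlocks₂₂_neg]
    simpa [toBlocks_fromBlocks₂₂] using h2
  · have hM : -M = Jm (Fin q) (Fin s) *
        fromBlocks (-(M.toBlocks₁₁)) M.toBlocks₁₂ M.toBlocks₂₁ (-(M.toBlocks₂₂)) *
        Jm (Fin q) (Fin s) := by
      rw [Jm_conj_fromBlocks]
      conv_lhs => rw [← fromBlocks_toBlocks M]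
      rw [fromBlocks_neg]
    rw [hM, matIm_conj _ _ Jm_herm]
    have := h0.conjTranspose_mul_mul_same (Jm (Fin q) (Fin s))
    rwa [Jm_herm] at this

end MPSAux

open MPSAux in
/-- Partial semigroup property: if `Q ∈ 𝓜(q,r,+)` and `R ∈ 𝓜(r,s,+)` then
`(Q,R)` is `⊲`-suitable and `Q ⊲ R ∈ 𝓜(q,s,+)`, and the same holds with
`𝓜(·,·,−)` in place of `𝓜(·,·,+)`. -/
theorem mplus_partial_semigroup {q r s : ℕ}
    (Q : Matrix (Fin q ⊕ Fin r) (Fin q ⊕ Fin r) ℂ)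
    (R : Matrix (Fin r ⊕ Fin s) (Fin r ⊕ Fin s) ℂ) :
    (MPlus Q → MPlus R → Suitable Q R ∧ MPlus (tri Q R)) ∧
    (MMinus Q → MMinus R → Suitable Q R ∧ MMinus (tri Q R)) := by
  constructor
  · exact fun hQ hR => key Q R hQ hR
  · intro hQ hR
    obtain ⟨hS, hM⟩ := key (-Q) (-R) hQ hR
    constructor
    · have h : (1 : Matrix (Fin r) (Fin r) ℂ) - (-R).toBlocks₁₁ * (-Q).toBlocks₂₂
          = 1 - R.toBlocks₁₁ * Q.toBlocks₂₂ := by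
        rw [toBlocks₁₁_neg, toBlocks₂₂_neg, neg_mul_neg]
      unfold Suitable at hS ⊢
      rwa [h] at hS
    · unfold MMinus
      exact mplus_flip _ (by rwa [tri_neg_neg] at hM)

end
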